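/- For every natural number m ≥ 6, the number of natural numbers p with m ≤ p < m + 30 such that both p and p + 2 are prime is at most 3. -/

import Mathlib

theorem twin_primes_in_thirty_block_le_three (m : ℕ) (hm : 6 ≤ m) :
    ((Finset.Ico m (m + 30)).filter (fun p => p.Prime ∧ (p + 2).Prime)).card ≤ 3 := by
  have h := Finset.card_le_card_of_injOn (f := fun p => p % 30)
    (s := (Finset.Ico m (m + 30)).filter (fun p => p.Prime ∧ (p + 2).Prime))
    (t := ({11, 17, 29} : Finset ℕ)) ?_ ?_
  · simpa using h
  · intro p hp
    simp only [Finset.mem_coe, Finset.mem_filter, Finset.mem_Ico] at hp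
    obtain ⟨⟨hp1, hp2⟩, hpr, hqr⟩ := hp
    have h6 : 6 ≤ p := le_trans hm hp1
    have nd : ∀ d : ℕ, d ∣ p → d = 1 ∨ d = p := fun d hd => hpr.eq_one_or_self_of_dvd d hd
    have nd2 : ∀ d : ℕ, d ∣ (p + 2) → d = 1 ∨ d = p + 2 :=
      fun d hd => hqr.eq_one_or_self_of_dvd d hd
    have h2 : ¬ 2 ∣ p := fun h => by rcases nd 2 h with h' | h' <;> omega
    have h3 : ¬ 3 ∣ p := fun h => by rcases nd 3 h with h' | h' <;> omega
    have h5 : ¬ 5 ∣ p := fun h => by rcases nd 5 h with h' | h' <;> omega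
    have h3' : ¬ 3 ∣ (p + 2) := fun h => by rcases nd2 3 h with h' | h' <;> omega
    have h5' : ¬ 5 ∣ (p + 2) := fun h => by rcases nd2 5 h with h' | h' <;> omega
    have m2 : p % 2 ≠ 0 := fun h => h2 (Nat.dvd_of_mod_eq_zero h)
    have m3 : p % 3 ≠ 0 := fun h => h3 (Nat.dvd_of_mod_eq_zero h)
    have m5 : p % 5 ≠ 0 := fun h => h5 (Nat.dvd_of_mod_eq_zero h)
    have m3' : (p + 2) % 3 ≠ 0 := fun h => h3' (Nat.dvd_of_mod_eq_zero h)
    have m5' : (p + 2) % 5 ≠ 0 := fun h => h5' (Nat.dvd_of_mod_eq_zero h)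
    simp only [Finset.mem_coe, Finset.mem_insert, Finset.mem_singleton]
    have hr : p % 30 < 30 := Nat.mod_lt _ (by norm_num)
    have hpr30 : 30 * (p / 30) + p % 30 = p := Nat.div_add_mod p 30
    interval_cases h : p % 30 <;> omega
  · intro p hp q hq hpq
    simp only [Finset.coe_filter, Set.mem_setOf_eq, Finset.mem_Ico] at hp hq
    simp only at hpq
    omega
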